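/- arXiv:2211.08767 — 2 statements merged into one kernel-verified Lean document; each statement's English description precedes it below -/
import Mathlib

section
/- Let 0 < 𝔭_f^- < 𝔭_f^+ < κ. Then there exist constants 0 < C₁ ≤ C₂, depending only on κ, γ_i, γ_c, 𝔭_f^-, 𝔭_f^+, and a threshold ε̄ > 0, such that for every 0 < ε < ε̄ and every p ∈ [𝔭_f^-, 𝔭_f^+] one has C₁ ≤ −𝒯_ε'(p) ≤ C₂. -/
open Set Filter MeasureTheory Topology

/-- The singular pressure law `𝒫_ε(τ) = κ τ^{-γᵢ} + ε (τ-1)^{-γ_c}`. -/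
noncomputable def Pe (κ γi γc ε τ : ℝ) : ℝ := κ * τ ^ (-γi) + ε * (τ - 1) ^ (-γc)

lemma hasDerivAt_Pe (κ γi γc ε τ : ℝ) (hτ : 1 < τ) :
    HasDerivAt (Pe κ γi γc ε)
      (-(κ * γi * τ ^ (-γi - 1) + ε * γc * (τ - 1) ^ (-γc - 1))) τ := by
  have hτ0 : τ ≠ 0 := by linarith
  have hτ1 : τ - 1 ≠ 0 := by intro h; nlinarith [h]
  have h1 : HasDerivAt (fun x : ℝ => x ^ (-γi)) (-γi * τ ^ (-γi - 1)) τ :=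
    Real.hasDerivAt_rpow_const (Or.inl hτ0)
  have h2 : HasDerivAt (fun x : ℝ => (x - 1) ^ (-γc)) (-γc * (τ - 1) ^ (-γc - 1) * 1) τ :=
    by have h2' := (Real.hasDerivAt_rpow_const (p := -γc) (Or.inl hτ1)).comp τ
         ((hasDerivAt_id τ).sub_const 1)
       exact h2'
  have h : HasDerivAt (fun x : ℝ => κ * x ^ (-γi) + ε * (x - 1) ^ (-γc))
      (κ * (-γi * τ ^ (-γi - 1)) + ε * (-γc * (τ - 1) ^ (-γc - 1) * 1)) τ :=
    (h1.const_mul κ).add (h2.const_mul ε)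
  have heq : κ * (-γi * τ ^ (-γi - 1)) + ε * (-γc * (τ - 1) ^ (-γc - 1) * 1)
      = -(κ * γi * τ ^ (-γi - 1) + ε * γc * (τ - 1) ^ (-γc - 1)) := by ring
  rw [heq] at h
  exact h

set_option maxHeartbeats 1000000 in
/-- On a free-pressure interval `[𝔭_f⁻, 𝔭_f⁺] ⊂ (0,κ)`, the derivative of `𝒯_ε` satisfies
uniform two-sided bounds `C₁ ≤ -𝒯_ε'(p) ≤ C₂` independent of `ε` small. -/
theorem stmt5 (κ γi γc pf1 pf2 : ℝ) (hκ : 0 < κ) (hγi : 1 < γi) (hγc : 1 < γc)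
    (hpf1 : 0 < pf1) (hpf12 : pf1 < pf2) (hpf2 : pf2 < κ)
    (T : ℝ → ℝ → ℝ)
    (hT : ∀ ε > (0:ℝ), ∀ p > (0:ℝ), 1 < T ε p ∧ Pe κ γi γc ε (T ε p) = p) :
    ∃ C₁ C₂ εb : ℝ, 0 < C₁ ∧ C₁ ≤ C₂ ∧ 0 < εb ∧
      ∀ ε, 0 < ε → ε < εb → ∀ p ∈ Icc pf1 pf2,
        C₁ ≤ -deriv (T ε) p ∧ -deriv (T ε) p ≤ C₂ := by
  have hγi0 : (0:ℝ) < γi := by linarith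
  have hγc0 : (0:ℝ) < γc := by linarith
  set q1 : ℝ := pf1 / 2 with hq1def
  set q2 : ℝ := (pf2 + κ) / 2 with hq2def
  have hq1pos : 0 < q1 := by rw [hq1def]; linarith
  have hq1lt : q1 < pf1 := by rw [hq1def]; linarith
  have hq2gt : pf2 < q2 := by rw [hq2def]; linarith
  have hq2κ : q2 < κ := by rw [hq2def]; linarith
  have hq12 : q1 < q2 := by linarith
  set τm : ℝ := (κ / q2) ^ γi⁻¹ with hτmdef
  set τp : ℝ := (2 * κ / q1) ^ γi⁻¹ with hτpdef
  have hτm1 : 1 < τm := by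
    have h1 : (1:ℝ) < κ / q2 := (one_lt_div (by linarith)).2 hq2κ
    calc (1:ℝ) = (1:ℝ) ^ γi⁻¹ := (Real.one_rpow _).symm
      _ < τm := Real.rpow_lt_rpow zero_le_one h1 (by positivity)
  have hτmp : τm ≤ τp := by
    have hb : κ / q2 ≤ 2 * κ / q1 := by
      rw [div_le_div_iff₀ (by linarith) hq1pos]; nlinarith
    exact Real.rpow_le_rpow (le_of_lt (div_pos hκ (by linarith))) hb (by positivity)
  have hτp1 : 1 < τp := lt_of_lt_of_le hτm1 hτmp
  have hτm0 : 0 < τm := by linarith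
  have hτp0 : 0 < τp := by linarith
  -- key value of the pressure at τp
  have hτp_val : κ * τp ^ (-γi) = q1 / 2 := by
    have hbase : (0:ℝ) ≤ 2 * κ / q1 := by positivity
    have h1 : τp ^ (-γi) = q1 / (2 * κ) := by
      rw [hτpdef, ← Real.rpow_mul hbase]
      have h2 : γi⁻¹ * -γi = -1 := by field_simp
      rw [h2, Real.rpow_neg_one, inv_div]
    rw [h1]; field_simp
  -- the threshold
  set εb : ℝ := q1 / 2 * (τp - 1) ^ γc with hεbdef
  have hεb_pos : 0 < εb := by
    have : (0:ℝ) < (τp - 1) ^ γc := Real.rpow_pos_of_pos (by linarith) _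
    rw [hεbdef]; positivity
  -- bounds on T ε p
  have hbound : ∀ ε, 0 < ε → ε < εb → ∀ p, q1 ≤ p → p ≤ q2 → T ε p ∈ Icc τm τp := by
    intro ε hε hεb' p hp1 hp2
    have hp0 : 0 < p := lt_of_lt_of_le hq1pos hp1
    obtain ⟨hτ1, hPe⟩ := hT ε hε p hp0
    simp only [Pe] at hPe
    have hτ0 : 0 < T ε p := by linarith
    have hτ10 : 0 < T ε p - 1 := by linarith
    constructor
    · -- lower bound
      have hpos2 : 0 ≤ ε * (T ε p - 1) ^ (-γc) := by positivity
      have h1 : κ * T ε p ^ (-γi) ≤ q2 := by linarith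
      have hτγ : 0 < T ε p ^ γi := Real.rpow_pos_of_pos hτ0 γi
      have hneg : T ε p ^ (-γi) = (T ε p ^ γi)⁻¹ := Real.rpow_neg hτ0.le γi
      rw [hneg] at h1
      have h2 : κ / q2 ≤ T ε p ^ γi := by
        rw [div_le_iff₀ (by linarith)]
        nlinarith [mul_le_mul_of_nonneg_right h1 hτγ.le, mul_inv_cancel₀ hτγ.ne']
      calc τm = (κ / q2) ^ γi⁻¹ := hτmdef
        _ ≤ (T ε p ^ γi) ^ γi⁻¹ :=
            Real.rpow_le_rpow (le_of_lt (div_pos hκ (by linarith))) h2 (by positivity)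
        _ = T ε p := Real.rpow_rpow_inv hτ0.le (by positivity)
    · -- upper bound
      by_contra hcon
      push_neg at hcon
      have h1 : κ * T ε p ^ (-γi) < q1 / 2 := by
        have hlt : T ε p ^ (-γi) < τp ^ (-γi) :=
          Real.rpow_lt_rpow_of_neg hτp0 hcon (by linarith : -γi < 0)
        calc κ * T ε p ^ (-γi) < κ * τp ^ (-γi) := mul_lt_mul_of_pos_left hlt hκ
          _ = q1 / 2 := hτp_val
      have h2 : ε * (T ε p - 1) ^ (-γc) < q1 / 2 := by
        have ha : (T ε p - 1) ^ (-γc) ≤ (τp - 1) ^ (-γc) :=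
          Real.rpow_le_rpow_of_nonpos (by linarith) (by linarith) (by linarith)
        have hpow : 0 < (τp - 1) ^ (-γc) := Real.rpow_pos_of_pos (by linarith) _
        have hpow2 : 0 ≤ (T ε p - 1) ^ (-γc) := by positivity
        calc ε * (T ε p - 1) ^ (-γc) ≤ ε * (τp - 1) ^ (-γc) :=
              mul_le_mul_of_nonneg_left ha hε.le
          _ < εb * (τp - 1) ^ (-γc) := mul_lt_mul_of_pos_right hεb' hpow
          _ = q1 / 2 := by
              rw [hεbdef, mul_assoc, ← Real.rpow_add (by linarith), add_neg_cancel,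
                Real.rpow_zero, mul_one]
      linarith
  -- derivative bounds
  set m : ℝ := κ * γi * τp ^ (-γi - 1) with hmdef
  set M : ℝ := κ * γi * τm ^ (-γi - 1) + εb * γc * (τm - 1) ^ (-γc - 1) with hMdef
  have hm : 0 < m := by
    have : (0:ℝ) < τp ^ (-γi - 1) := Real.rpow_pos_of_pos hτp0 _
    rw [hmdef]; positivity
  have hmM : m ≤ M := by
    have h1 : τp ^ (-γi - 1) ≤ τm ^ (-γi - 1) :=
      Real.rpow_le_rpow_of_nonpos hτm0 hτmp (by linarith)
    have h2 : 0 < (τm - 1) ^ (-γc - 1) := Real.rpow_pos_of_pos (by linarith) _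
    have h3 := mul_le_mul_of_nonneg_left h1 (by positivity : (0:ℝ) ≤ κ * γi)
    have h4 : 0 < εb * γc * (τm - 1) ^ (-γc - 1) :=
      mul_pos (mul_pos hεb_pos hγc0) h2
    rw [hmdef, hMdef]
    calc κ * γi * τp ^ (-γi - 1) ≤ κ * γi * τm ^ (-γi - 1) := by nlinarith [h3]
      _ ≤ κ * γi * τm ^ (-γi - 1) + εb * γc * (τm - 1) ^ (-γc - 1) := by linarith
  have hM : 0 < M := lt_of_lt_of_le hm hmM
  have hDlow : ∀ ε τ, 0 ≤ ε → τm ≤ τ → τ ≤ τp →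
      m ≤ κ * γi * τ ^ (-γi - 1) + ε * γc * (τ - 1) ^ (-γc - 1) := by
    intro ε τ hε h1 h2
    have hτ0 : 0 < τ := by linarith
    have ha : τp ^ (-γi - 1) ≤ τ ^ (-γi - 1) :=
      Real.rpow_le_rpow_of_nonpos hτ0 h2 (by linarith)
    have hb : 0 ≤ ε * γc * (τ - 1) ^ (-γc - 1) := by
      have : (0:ℝ) < (τ - 1) ^ (-γc - 1) := Real.rpow_pos_of_pos (by linarith) _
      positivity
    have ha' := mul_le_mul_of_nonneg_left ha (by positivity : (0:ℝ) ≤ κ * γi)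
    rw [hmdef]
    calc κ * γi * τp ^ (-γi - 1) ≤ κ * γi * τ ^ (-γi - 1) := ha'
      _ ≤ _ := by linarith
  have hDhigh : ∀ ε τ, 0 ≤ ε → ε ≤ εb → τm ≤ τ → τ ≤ τp →
      κ * γi * τ ^ (-γi - 1) + ε * γc * (τ - 1) ^ (-γc - 1) ≤ M := by
    intro ε τ hε hε' h1 h2
    have ha : τ ^ (-γi - 1) ≤ τm ^ (-γi - 1) :=
      Real.rpow_le_rpow_of_nonpos hτm0 h1 (by linarith)
    have hb : (τ - 1) ^ (-γc - 1) ≤ (τm - 1) ^ (-γc - 1) :=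
      Real.rpow_le_rpow_of_nonpos (by linarith) (by linarith) (by linarith)
    have hbpos : 0 < (τ - 1) ^ (-γc - 1) := Real.rpow_pos_of_pos (by linarith) _
    have ha' := mul_le_mul_of_nonneg_left ha (by positivity : (0:ℝ) ≤ κ * γi)
    have t1 : ε * γc * (τ - 1) ^ (-γc - 1) ≤ εb * γc * (τ - 1) ^ (-γc - 1) :=
      mul_le_mul_of_nonneg_right (mul_le_mul_of_nonneg_right hε' hγc0.le) hbpos.le
    have t2 : εb * γc * (τ - 1) ^ (-γc - 1) ≤ εb * γc * (τm - 1) ^ (-γc - 1) :=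
      mul_le_mul_of_nonneg_left hb (mul_nonneg hεb_pos.le hγc0.le)
    rw [hMdef]; linarith
  -- Lipschitz continuity of T ε on [q1, q2]
  have hlip : ∀ ε, 0 < ε → ε < εb → ContinuousOn (T ε) (Icc q1 q2) := by
    intro ε hε hεb'
    have hline : ∀ x : ℝ, HasDerivAt (fun τ : ℝ => m * τ) m x := fun x => by
      simpa using (hasDerivAt_id x).const_mul m
    have hg_anti : AntitoneOn (fun τ => Pe κ γi γc ε τ + m * τ) (Icc τm τp) := by
      apply antitoneOn_of_deriv_nonpos (convex_Icc _ _)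
      · intro x hx
        have hx1 : 1 < x := lt_of_lt_of_le hτm1 hx.1
        exact ((hasDerivAt_Pe κ γi γc ε x hx1).add
          (hline x)).continuousAt.continuousWithinAt
      · intro x hx
        rw [interior_Icc] at hx
        have hx1 : 1 < x := lt_of_lt_of_le hτm1 hx.1.le
        exact ((hasDerivAt_Pe κ γi γc ε x hx1).add
          (hline x)).differentiableAt.differentiableWithinAt
      · intro x hx
        rw [interior_Icc] at hx
        have hx1 : 1 < x := lt_of_lt_of_le hτm1 hx.1.le
        have hd := (hasDerivAt_Pe κ γi γc ε x hx1).add (hline x)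
        rw [show (fun τ => Pe κ γi γc ε τ + m * τ) = (Pe κ γi γc ε + fun τ => m * τ) from rfl, hd.deriv]
        have := hDlow ε x hε.le hx.1.le hx.2.le
        linarith
    have oneside : ∀ p q, q1 ≤ p → p ≤ q2 → q1 ≤ q → q ≤ q2 → T ε p ≤ T ε q →
        T ε q - T ε p ≤ m⁻¹ * (p - q) := by
      intro p q hp1 hp2 hq1' hq2' hle
      obtain ⟨ha1, ha2⟩ := hbound ε hε hεb' p hp1 hp2
      obtain ⟨hb1, hb2⟩ := hbound ε hε hεb' q hq1' hq2'
      have h := hg_anti ⟨ha1, ha2⟩ ⟨hb1, hb2⟩ hle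
      simp only at h
      rw [(hT ε hε p (by linarith)).2, (hT ε hε q (by linarith)).2] at h
      have h3 : m * (T ε q - T ε p) ≤ p - q := by linarith
      calc T ε q - T ε p = m⁻¹ * (m * (T ε q - T ε p)) := by field_simp
        _ ≤ m⁻¹ * (p - q) := mul_le_mul_of_nonneg_left h3 (by positivity)
    have key : ∀ p ∈ Icc q1 q2, ∀ q ∈ Icc q1 q2,
        dist (T ε p) (T ε q) ≤ m⁻¹ * dist p q := by
      intro p hp q hq
      rw [Real.dist_eq, Real.dist_eq]
      rcases le_total (T ε p) (T ε q) with h | h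
      · have h1 := oneside p q hp.1 hp.2 hq.1 hq.2 h
        have habs : |T ε p - T ε q| = T ε q - T ε p := by
          rw [abs_sub_comm]; exact abs_of_nonneg (by linarith)
        rw [habs]
        calc T ε q - T ε p ≤ m⁻¹ * (p - q) := h1
          _ ≤ m⁻¹ * |p - q| := mul_le_mul_of_nonneg_left (le_abs_self _) (by positivity)
      · have h1 := oneside q p hq.1 hq.2 hp.1 hp.2 h
        have habs : |T ε p - T ε q| = T ε p - T ε q := abs_of_nonneg (by linarith)
        rw [habs]
        calc T ε p - T ε q ≤ m⁻¹ * (q - p) := h1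
          _ ≤ m⁻¹ * |p - q| := by
              apply mul_le_mul_of_nonneg_left _ (by positivity : (0:ℝ) ≤ m⁻¹)
              rw [abs_sub_comm]; exact le_abs_self _
    exact (LipschitzOnWith.of_dist_le' key).continuousOn
  -- conclusion
  refine ⟨M⁻¹, m⁻¹, εb, inv_pos.2 hM, inv_anti₀ hm hmM, hεb_pos, ?_⟩
  intro ε hε hεb' p hp
  have hp1 : q1 < p := lt_of_lt_of_le hq1lt hp.1
  have hp2 : p < q2 := lt_of_le_of_lt hp.2 hq2gt
  obtain ⟨hτ1', hτ2'⟩ := hbound ε hε hεb' p hp1.le hp2.le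
  have hτgt1 : 1 < T ε p := lt_of_lt_of_le hτm1 hτ1'
  have hcont : ContinuousAt (T ε) p :=
    (hlip ε hε hεb').continuousAt (Icc_mem_nhds hp1 hp2)
  have hDpos : 0 < κ * γi * T ε p ^ (-γi - 1) + ε * γc * (T ε p - 1) ^ (-γc - 1) :=
    lt_of_lt_of_le hm (hDlow ε (T ε p) hε.le hτ1' hτ2')
  have hder : HasDerivAt (T ε)
      (-(κ * γi * T ε p ^ (-γi - 1) + ε * γc * (T ε p - 1) ^ (-γc - 1)))⁻¹ p := by
    apply HasDerivAt.of_local_left_inverse hcont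
      (hasDerivAt_Pe κ γi γc ε (T ε p) hτgt1) (by intro h; rw [neg_eq_zero] at h; linarith)
    filter_upwards [eventually_gt_nhds (show (0:ℝ) < p by linarith)] with y hy
    exact (hT ε hε y hy).2
  rw [hder.deriv]
  have hval : -(-(κ * γi * T ε p ^ (-γi - 1) + ε * γc * (T ε p - 1) ^ (-γc - 1)))⁻¹
      = (κ * γi * T ε p ^ (-γi - 1) + ε * γc * (T ε p - 1) ^ (-γc - 1))⁻¹ := by
    rw [inv_neg, neg_neg]
  rw [hval]
  constructor
  · exact inv_anti₀ hDpos (hDhigh ε (T ε p) hε.le hεb'.le hτ1' hτ2')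
  · exact inv_anti₀ hm (hDlow ε (T ε p) hε.le hτ1' hτ2')
end

section
/- Let κ < 𝔭_c^- < 𝔭_c^+. Then there exist a constant c > 0 and a threshold ε̄ > 0 such that for every 0 < ε < ε̄ and every pair p_ℓ, p_r ∈ [𝔭_c^-, 𝔭_c^+] with p_ℓ ≠ p_r, the Rankine–Hugoniot speed of the discontinuity connecting them satisfies √((p_ℓ − p_r)/(𝒯_ε(p_r) − 𝒯_ε(p_ℓ))) ≥ c ε^{−1/(2γ_c)} (note that the quantity under the square root is positive since 𝒯_ε is strictly decreasing); hence the speed of waves connecting congested states tends to infinity as ε → 0. -/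
open Set Filter MeasureTheory Topology

lemma Pe_strictAnti {κ γi γc ε : ℝ} (hκ : 0 < κ) (hγi : 0 < γi) (hγc : 0 < γc) (hε : 0 < ε)
    {s t : ℝ} (hs : 1 < s) (hst : s < t) : Pe κ γi γc ε t < Pe κ γi γc ε s := by
  unfold Pe
  have h1 : t ^ (-γi) < s ^ (-γi) :=
    Real.rpow_lt_rpow_of_neg (lt_trans one_pos hs) hst (by linarith)
  have h2 : (t - 1) ^ (-γc) < (s - 1) ^ (-γc) :=
    Real.rpow_lt_rpow_of_neg (by linarith) (by linarith) (by linarith)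
  have h3 := mul_lt_mul_of_pos_left h1 hκ
  have h4 := mul_lt_mul_of_pos_left h2 hε
  linarith

lemma key_bound (κ γi γc pc1 pc2 : ℝ) (hκ : 0 < κ) (hγi : 1 < γi) (hγc : 1 < γc)
    (hpc1 : κ < pc1) (T : ℝ → ℝ → ℝ)
    (hT : ∀ ε > (0:ℝ), ∀ p > (0:ℝ), 1 < T ε p ∧ Pe κ γi γc ε (T ε p) = p)
    {ε pl pr : ℝ} (hε : 0 < ε) (hpl : pl ∈ Icc pc1 pc2) (hpr : pr ∈ Icc pc1 pc2)
    (hlt : pr < pl) :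
    γc * (pc1 - κ) ^ ((γc + 1) / γc) * ε ^ (-1 / γc) ≤ (pl - pr) / (T ε pr - T ε pl) := by
  have hd : 0 < pc1 - κ := by linarith
  have hγc0 : 0 < γc := by linarith
  obtain ⟨hA1, hPA⟩ := hT ε hε pl (by linarith [hpl.1])
  obtain ⟨hB1, hPB⟩ := hT ε hε pr (by linarith [hpr.1])
  set A := T ε pl with hAd
  set B := T ε pr with hBd
  have hAB : A < B := by
    rcases lt_trichotomy A B with h | h | h
    · exact h
    · exfalso; rw [h] at hPA; have := hPA.symm.trans hPB; linarith
    · exfalso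
      have := Pe_strictAnti (γi := γi) hκ (zero_lt_one.trans hγi) hγc0 hε hB1 h
      rw [hPA, hPB] at this; linarith
  unfold Pe at hPA hPB
  set x := A - 1 with hxd
  set y := B - 1 with hyd
  have hx : 0 < x := sub_pos.mpr hA1
  have hy : 0 < y := sub_pos.mpr hB1
  have hxy : x < y := by rw [hxd, hyd]; linarith
  set u := x ^ γc with hud
  set v := y ^ γc with hvd
  have hu : 0 < u := Real.rpow_pos_of_pos hx _
  have hv : 0 < v := Real.rpow_pos_of_pos hy _
  have huv : u ≤ v := Real.rpow_le_rpow hx.le hxy.le hγc0.le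
  -- Bernoulli
  have hber : 1 + γc * ((y - x) / x) ≤ v / u := by
    have h0 : (0:ℝ) ≤ y / x - 1 := by
      rw [le_sub_iff_add_le, zero_add]; exact (one_le_div hx).mpr hxy.le
    have hB := one_add_mul_self_le_rpow_one_add (by linarith : (-1:ℝ) ≤ y / x - 1) hγc.le
    have e1 : (1:ℝ) + (y / x - 1) = y / x := by ring
    rw [e1] at hB
    have e2 : (y / x) ^ γc = v / u := by
      rw [Real.div_rpow hy.le hx.le]
    have e3 : y / x - 1 = (y - x) / x := by field_simp
    rw [e2, e3] at hB
    exact hB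
  have hkey : γc * (y - x) * u ≤ (v - u) * x := by
    have h := mul_le_mul_of_nonneg_left hber (le_of_lt (mul_pos hu hx))
    have e4 : u * x * (1 + γc * ((y - x) / x)) = u * x + γc * (y - x) * u := by
      field_simp
    have e5 : u * x * (v / u) = v * x := by field_simp
    rw [e4, e5] at h
    linarith
  have hfrac : γc * (y - x) / (v * y) ≤ u⁻¹ - v⁻¹ := by
    rw [div_le_iff₀ (by positivity)]
    have e : (u⁻¹ - v⁻¹) * (v * y) = (v - u) * y / u := by field_simp
    rw [e, le_div_iff₀ hu]
    have h1 : (v - u) * x ≤ (v - u) * y :=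
      mul_le_mul_of_nonneg_left hxy.le (sub_nonneg.mpr huv)
    nlinarith [hkey]
  -- rewrite the pressure relations
  have e1 : x ^ (-γc) = u⁻¹ := by rw [Real.rpow_neg hx.le]
  have e2 : y ^ (-γc) = v⁻¹ := by rw [Real.rpow_neg hy.le]
  rw [e1] at hPA
  rw [e2] at hPB
  have hAi : B ^ (-γi) ≤ A ^ (-γi) :=
    Real.rpow_le_rpow_of_nonpos (by linarith) hAB.le (by linarith)
  have hκmono : κ * B ^ (-γi) ≤ κ * A ^ (-γi) := mul_le_mul_of_nonneg_left hAi hκ.le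
  have hdiff : ε * (u⁻¹ - v⁻¹) ≤ pl - pr := by nlinarith [hκmono, hPA, hPB]
  -- bound on y
  have hyb : y ≤ (ε / (pc1 - κ)) ^ (1 / γc) := by
    have hBlt1 : B ^ (-γi) < 1 := Real.rpow_lt_one_of_one_lt_of_neg hB1 (by linarith)
    have h3 : pc1 - κ ≤ ε * v⁻¹ := by
      have h7 := mul_lt_mul_of_pos_left hBlt1 hκ
      rw [mul_one] at h7
      linarith [hpr.1]
    have h4 : v ≤ ε / (pc1 - κ) := by
      rw [le_div_iff₀ hd]
      have h5 := mul_le_mul_of_nonneg_right h3 hv.le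
      rw [mul_assoc, inv_mul_cancel₀ hv.ne', mul_one] at h5
      linarith
    have h5 : v ^ (1 / γc) ≤ (ε / (pc1 - κ)) ^ (1 / γc) :=
      Real.rpow_le_rpow hv.le h4 (by positivity)
    have h6 : v ^ (1 / γc) = y := by
      rw [hvd, ← Real.rpow_mul hy.le, mul_one_div_cancel hγc0.ne', Real.rpow_one]
    rwa [h6] at h5
  set W := (ε / (pc1 - κ)) ^ ((γc + 1) / γc) with hWd
  have hW : 0 < W := Real.rpow_pos_of_pos (div_pos hε hd) _
  have hvy : v * y ≤ W := by
    have h1 : v * y = y ^ (γc + 1) := by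
      rw [Real.rpow_add_one hy.ne' γc]
    have h2 : y ^ (γc + 1) ≤ ((ε / (pc1 - κ)) ^ (1 / γc)) ^ (γc + 1) :=
      Real.rpow_le_rpow hy.le hyb (by linarith)
    have h3 : ((ε / (pc1 - κ)) ^ (1 / γc)) ^ (γc + 1) = W := by
      rw [hWd, ← Real.rpow_mul (div_pos hε hd).le]
      congr 1
      field_simp
    rw [h1]; rw [h3] at h2; exact h2
  -- exponent arithmetic
  have hεe : 0 < ε ^ ((γc + 1) / γc) := Real.rpow_pos_of_pos hε _
  have hde : 0 < (pc1 - κ) ^ ((γc + 1) / γc) := Real.rpow_pos_of_pos hd _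
  have hexp : ε ^ (-1 / γc) = ε / ε ^ ((γc + 1) / γc) := by
    rw [show (-1 / γc) = 1 - (γc + 1) / γc by field_simp; ring,
      Real.rpow_sub hε, Real.rpow_one]
  have hWsplit : W = ε ^ ((γc + 1) / γc) / (pc1 - κ) ^ ((γc + 1) / γc) := by
    rw [hWd, Real.div_rpow hε.le hd.le]
  -- final chain
  have hyx : 0 < y - x := sub_pos.mpr hxy
  have hTd : T ε pr - T ε pl = y - x := by rw [hxd, hyd]; ring
  rw [hTd, le_div_iff₀ hyx]
  have hc1 : γc * (pc1 - κ) ^ ((γc + 1) / γc) * ε ^ (-1 / γc) * (y - x)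
      = ε * (γc * (y - x) / W) := by
    rw [hexp, hWsplit]
    field_simp
  have hc2 : ε * (γc * (y - x) / W) ≤ ε * (γc * (y - x) / (v * y)) := by
    have h1 : γc * (y - x) / W ≤ γc * (y - x) / (v * y) := by
      apply div_le_div_of_nonneg_left (by positivity) (by positivity) hvy
    exact mul_le_mul_of_nonneg_left h1 hε.le
  have hc3 : ε * (γc * (y - x) / (v * y)) ≤ ε * (u⁻¹ - v⁻¹) :=
    mul_le_mul_of_nonneg_left hfrac hε.le
  linarith [hc1 ▸ (le_trans hc2 (le_trans hc3 hdiff))]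

/-- The Rankine–Hugoniot speed of a discontinuity connecting two congested states with
pressures in `[𝔭_c⁻, 𝔭_c⁺] ⊂ (κ,∞)` is at least `c ε^{-1/(2γ_c)}`: waves connecting
congested states have speeds tending to infinity as `ε → 0`. -/
theorem stmt8 (κ γi γc pc1 pc2 : ℝ) (hκ : 0 < κ) (hγi : 1 < γi) (hγc : 1 < γc)
    (hpc1 : κ < pc1) (hpc12 : pc1 < pc2)
    (T : ℝ → ℝ → ℝ)
    (hT : ∀ ε > (0:ℝ), ∀ p > (0:ℝ), 1 < T ε p ∧ Pe κ γi γc ε (T ε p) = p) :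
    ∃ c εb : ℝ, 0 < c ∧ 0 < εb ∧
      ∀ ε, 0 < ε → ε < εb → ∀ pl ∈ Icc pc1 pc2, ∀ pr ∈ Icc pc1 pc2, pl ≠ pr →
        c * ε ^ (-1 / (2 * γc)) ≤ Real.sqrt ((pl - pr) / (T ε pr - T ε pl)) := by
  have hd : 0 < pc1 - κ := by linarith
  set K := γc * (pc1 - κ) ^ ((γc + 1) / γc) with hKd
  have hK : 0 < K := mul_pos (by linarith) (Real.rpow_pos_of_pos hd _)
  refine ⟨Real.sqrt K, 1, Real.sqrt_pos.mpr hK, one_pos, ?_⟩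
  intro ε hε hε1 pl hpl pr hpr hne
  have hkey : K * ε ^ (-1 / γc) ≤ (pl - pr) / (T ε pr - T ε pl) := by
    rcases lt_or_gt_of_ne hne with h | h
    · have := key_bound κ γi γc pc1 pc2 hκ hγi hγc hpc1 T hT hε hpr hpl h
      have heq : (pr - pl) / (T ε pl - T ε pr) = (pl - pr) / (T ε pr - T ε pl) := by
        rw [show pr - pl = -(pl - pr) by ring, show T ε pl - T ε pr = -(T ε pr - T ε pl) by ring,
          neg_div_neg_eq]
      rw [heq] at this
      exact this
    · exact key_bound κ γi γc pc1 pc2 hκ hγi hγc hpc1 T hT hε hpl hpr h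
  have hsqrt : Real.sqrt (K * ε ^ (-1 / γc)) = Real.sqrt K * ε ^ (-1 / (2 * γc)) := by
    rw [Real.sqrt_mul hK.le, Real.sqrt_eq_rpow (ε ^ (-1 / γc)), ← Real.rpow_mul hε.le]
    congr 1
    field_simp
  calc Real.sqrt K * ε ^ (-1 / (2 * γc)) = Real.sqrt (K * ε ^ (-1 / γc)) := hsqrt.symm
    _ ≤ Real.sqrt ((pl - pr) / (T ε pr - T ε pl)) := Real.sqrt_le_sqrt hkey
end
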